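/- Let λ ∈ ℝ and let μ be a nonzero λ-eigenmeasure of r̃+J̃ which is absolutely continuous with a continuous nonnegative density u, i.e. μ(A) = ∫_A u(x) dx. Then u(x) > 0 for every x ∈ S and λ > r̄ := max_{x∈S} r(x). -/

import Mathlib

open MeasureTheory Filter Topology

/-- A finite positive Borel measure μ on S is a λ-eigenmeasure of the operator r̃+J̃ if for
every Borel set A ⊆ S one has ∫_A r dμ + ∫_A (∫_S K(y,x) μ(dy)) dx = λ μ(A). -/
def IsEigenmeasure {d : ℕ} (S : Set (EuclideanSpace ℝ (Fin d)))
    (r : EuclideanSpace ℝ (Fin d) → ℝ)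
    (K : EuclideanSpace ℝ (Fin d) → EuclideanSpace ℝ (Fin d) → ℝ)
    (lam : ℝ) (μ : MeasureTheory.Measure (EuclideanSpace ℝ (Fin d))) : Prop :=
  ∀ A : Set (EuclideanSpace ℝ (Fin d)), MeasurableSet A → A ⊆ S →
    (∫ x in A, r x ∂μ) + (∫ x in A, (∫ y in S, K y x ∂μ)) = lam * (μ A).toReal

/-- If a nonzero λ-eigenmeasure μ of r̃+J̃ is absolutely continuous with a continuous
nonnegative density u, then u is strictly positive on S and λ > r̄ = max_S r. -/
theorem stmt6 {d : ℕ}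
    (Ω S : Set (EuclideanSpace ℝ (Fin d)))
    (hΩne : Ω.Nonempty) (hΩopen : IsOpen Ω) (hΩbdd : Bornology.IsBounded Ω)
    (hΩconn : IsConnected Ω) (hSdef : S = closure Ω)
    (hScomp : IsCompact S) (hSvol : 0 < volume S)
    (r : EuclideanSpace ℝ (Fin d) → ℝ) (hr : ContinuousOn r S)
    (hrpos : ∀ x ∈ S, 0 < r x)
    (K : EuclideanSpace ℝ (Fin d) → EuclideanSpace ℝ (Fin d) → ℝ)
    (hK : ContinuousOn (fun q : EuclideanSpace ℝ (Fin d) × EuclideanSpace ℝ (Fin d) =>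
      K q.1 q.2) (S ×ˢ S))
    (hKnn : ∀ x ∈ S, ∀ y ∈ S, 0 ≤ K x y)
    (ε₀ c₀ : ℝ) (hε₀ : 0 < ε₀) (hc₀ : 0 < c₀)
    (hKlb : ∀ x ∈ S, ∀ y ∈ S, dist y x < ε₀ → c₀ < K x y)
    (μ : Measure (EuclideanSpace ℝ (Fin d))) [IsFiniteMeasure μ]
    (hμne : μ ≠ 0) (hμS : μ Sᶜ = 0)
    (lam : ℝ) (hμ : IsEigenmeasure S r K lam μ)
    (u : EuclideanSpace ℝ (Fin d) → ℝ) (hu : ContinuousOn u S)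
    (hunn : ∀ x ∈ S, 0 ≤ u x)
    (hdens : ∀ A : Set (EuclideanSpace ℝ (Fin d)), MeasurableSet A → A ⊆ S →
      (μ A).toReal = ∫ x in A, u x)
    (rbar : ℝ) (hrbar : IsGreatest (r '' S) rbar) :
    (∀ x ∈ S, 0 < u x) ∧ rbar < lam := by
  classical
  have _dummy : True := trivial
  have hSclosed : IsClosed S := hScomp.isClosed
  have hSmeas : MeasurableSet S := hSclosed.measurableSet
  have hΩsub : Ω ⊆ S := hSdef ▸ subset_closure
  have hvolfin : volume S ≠ ⊤ := hScomp.measure_lt_top.ne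
  -- positivity of volumes of relative balls
  have hvol : ∀ x ∈ S, ∀ δ : ℝ, 0 < δ → 0 < volume (S ∩ Metric.ball x δ) := by
    intro x hx δ hδ
    have hxΩ : x ∈ closure Ω := hSdef ▸ hx
    obtain ⟨y, hyΩ, hyd⟩ := Metric.mem_closure_iff.1 hxΩ δ hδ
    have hne : (Ω ∩ Metric.ball x δ).Nonempty :=
      ⟨y, hyΩ, by simpa [Metric.mem_ball, dist_comm] using hyd⟩
    have hopen : IsOpen (Ω ∩ Metric.ball x δ) := hΩopen.inter Metric.isOpen_ball
    calc (0 : ENNReal) < volume (Ω ∩ Metric.ball x δ) := hopen.measure_pos volume hne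
      _ ≤ volume (S ∩ Metric.ball x δ) :=
        measure_mono (Set.inter_subset_inter_left _ hΩsub)
  -- bounds
  obtain ⟨Cr, hCr⟩ := hScomp.exists_bound_of_continuousOn hr
  obtain ⟨Cu, hCu⟩ := hScomp.exists_bound_of_continuousOn hu
  obtain ⟨CK, hCK⟩ := (hScomp.prod hScomp).exists_bound_of_continuousOn hK
  -- integrability of u
  have huint : IntegrableOn u S volume := ContinuousOn.integrableOn_compact hScomp hu
  -- positivity of integrals of u over relative neighborhoods of a point where u > 0
  have hintpos : ∀ U : Set (EuclideanSpace ℝ (Fin d)), IsOpen U → ∀ x ∈ S ∩ U, 0 < u x →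
      0 < ∫ y in S ∩ U, u y := by
    intro U hU x hx hux
    obtain ⟨δ₁, hδ₁, hball⟩ := Metric.isOpen_iff.1 hU x hx.2
    have hcont : ContinuousWithinAt u S x := hu x hx.1
    have hev : u ⁻¹' Set.Ioi (u x / 2) ∈ 𝓝[S] x :=
      hcont (Ioi_mem_nhds (by linarith))
    obtain ⟨δ₂, hδ₂, hsub⟩ := Metric.mem_nhdsWithin_iff.1 hev
    set δ := min δ₁ δ₂ with hδdef
    have hδ : 0 < δ := lt_min hδ₁ hδ₂
    set T := S ∩ Metric.ball x δ with hT
    have hTmeas : MeasurableSet T := hSmeas.inter measurableSet_ball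
    have hTsub : T ⊆ S ∩ U := by
      intro z hz
      exact ⟨hz.1, hball (Metric.ball_subset_ball (min_le_left _ _) hz.2)⟩
    have hTfin : volume T ≠ ⊤ :=
      ((measure_mono (Set.inter_subset_left)).trans_lt hScomp.measure_lt_top).ne
    have hTlb : ∀ z ∈ T, u x / 2 ≤ u z := by
      intro z hz
      have : z ∈ Metric.ball x δ₂ ∩ S :=
        ⟨Metric.ball_subset_ball (min_le_right _ _) hz.2, hz.1⟩
      exact le_of_lt (hsub this)
    have hTvol : 0 < (volume T).toReal :=
      ENNReal.toReal_pos (hvol x hx.1 δ hδ).ne' hTfin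
    have h1 : u x / 2 * (volume T).toReal ≤ ∫ y in T, u y :=
      setIntegral_ge_of_const_le_real hTmeas hTfin hTlb
        ((huint.mono_set Set.inter_subset_left))
    have h2 : ∫ y in T, u y ≤ ∫ y in S ∩ U, u y := by
      refine setIntegral_mono_set (huint.mono_set Set.inter_subset_left) ?_ ?_
      · exact ae_restrict_of_forall_mem (hSmeas.inter hU.measurableSet)
          (fun z hz => hunn z hz.1)
      · exact HasSubset.Subset.eventuallyLE hTsub
    nlinarith
  -- consequence: vanishing integral forces vanishing of u
  have hzero : ∀ U : Set (EuclideanSpace ℝ (Fin d)), IsOpen U → (∫ y in S ∩ U, u y) = 0 →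
      ∀ x ∈ S ∩ U, u x = 0 := by
    intro U hU hint x hx
    by_contra hne
    have hux : 0 < u x := lt_of_le_of_ne (hunn x hx.1) (Ne.symm hne)
    have := hintpos U hU x hx hux
    linarith
  -- the kernel integral J
  set J : EuclideanSpace ℝ (Fin d) → ℝ := fun x => ∫ y in S, K y x ∂μ with hJdef
  have hKcont : ∀ x ∈ S, ContinuousOn (fun y => K y x) S := by
    intro x hx
    have hpair : ContinuousOn (fun y : EuclideanSpace ℝ (Fin d) => (y, x)) S :=
      (continuousOn_id.prodMk continuousOn_const)
    exact hK.comp hpair (fun y hy => Set.mk_mem_prod hy hx)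
  have hKyint : ∀ x ∈ S, IntegrableOn (fun y => K y x) S μ := by
    intro x hx
    refine ⟨(hKcont x hx).aestronglyMeasurable hSmeas, ?_⟩
    exact HasFiniteIntegral.of_bounded (C := CK)
      (ae_restrict_of_forall_mem hSmeas
        (fun y hy => hCK (y, x) (Set.mk_mem_prod hy hx)))
  -- continuity of J on S
  have hJcont : ContinuousOn J S := by
    have hUC := (hScomp.prod hScomp).uniformContinuousOn_of_continuous hK
    rw [Metric.uniformContinuousOn_iff] at hUC
    intro x hx
    rw [Metric.continuousWithinAt_iff]
    intro ε hε
    set M := (μ S).toReal + 1 with hM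
    have hMpos : 0 < M := by positivity
    obtain ⟨δ, hδ, hδ'⟩ := hUC (ε / (2 * M)) (by positivity)
    refine ⟨δ, hδ, fun x' hx' hdist => ?_⟩
    have hsub : J x' - J x = ∫ y in S, (K y x' - K y x) ∂μ :=
      (integral_sub (hKyint x' hx') (hKyint x hx)).symm
    have hbound : ∀ y ∈ S, ‖K y x' - K y x‖ ≤ ε / (2 * M) := by
      intro y hy
      have h1 : dist ((y, x') : EuclideanSpace ℝ (Fin d) × EuclideanSpace ℝ (Fin d)) (y, x) < δ := by
        rw [Prod.dist_eq]
        simp only [dist_self]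
        exact max_lt hδ hdist
      have := hδ' (y, x') (Set.mk_mem_prod hy hx') (y, x) (Set.mk_mem_prod hy hx) h1
      rw [Real.dist_eq] at this
      exact le_of_lt this
    have hmeas : AEStronglyMeasurable (fun y => K y x' - K y x) (μ.restrict S) :=
      ((hKcont x' hx').aestronglyMeasurable hSmeas).sub
        ((hKcont x hx).aestronglyMeasurable hSmeas)
    have h2 : ‖∫ y in S, (K y x' - K y x) ∂μ‖ ≤ ε / (2 * M) * (μ S).toReal :=
      norm_setIntegral_le_of_norm_le_const (measure_lt_top μ S) hbound
    have h3 : ε / (2 * M) * (μ S).toReal ≤ ε / (2 * M) * M := by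
      have : (μ S).toReal ≤ M := by rw [hM]; linarith
      exact mul_le_mul_of_nonneg_left this (by positivity)
    have h4 : ε / (2 * M) * M = ε / 2 := by field_simp
    rw [Real.dist_eq, hsub]
    calc |∫ y in S, (K y x' - K y x) ∂μ| ≤ ε / (2 * M) * (μ S).toReal := by
          simpa [Real.norm_eq_abs] using h2
      _ ≤ ε / 2 := le_trans h3 h4.le
      _ < ε := by linarith
  have hJint : IntegrableOn J S volume := ContinuousOn.integrableOn_compact hScomp hJcont
  -- lower bound on J near any point of S
  have hJlb : ∀ x₀ ∈ S, ∀ x ∈ S ∩ Metric.ball x₀ (ε₀ / 2),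
      c₀ * (μ (S ∩ Metric.ball x₀ (ε₀ / 2))).toReal ≤ J x := by
    intro x₀ h₀ x hx
    set B := S ∩ Metric.ball x₀ (ε₀ / 2) with hB
    have hBmeas : MeasurableSet B := hSmeas.inter measurableSet_ball
    have hlb : ∀ y ∈ B, c₀ ≤ K y x := by
      intro y hy
      have hd : dist y x < ε₀ := by
        have h1 : dist y x₀ < ε₀ / 2 := hy.2
        have h2 : dist x x₀ < ε₀ / 2 := hx.2
        calc dist y x ≤ dist y x₀ + dist x₀ x := dist_triangle _ _ _
          _ < ε₀ / 2 + ε₀ / 2 := by rw [dist_comm x₀ x]; linarith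
          _ = ε₀ := by ring
      exact (hKlb y hy.1 x hx.1 (by rw [dist_comm]; exact hd)).le
    have h1 : c₀ * (μ B).toReal ≤ ∫ y in B, K y x ∂μ :=
      setIntegral_ge_of_const_le_real hBmeas (measure_ne_top μ B) hlb
        ((hKyint x hx.1).mono_set Set.inter_subset_left)
    have h2 : ∫ y in B, K y x ∂μ ≤ ∫ y in S, K y x ∂μ := by
      refine setIntegral_mono_set (hKyint x hx.1) ?_ ?_
      · exact ae_restrict_of_forall_mem hSmeas (fun y hy => hKnn y hy x hx.1)
      · exact HasSubset.Subset.eventuallyLE Set.inter_subset_left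
    linarith
  -- the eigen-equation with J
  have hkey : ∀ A : Set (EuclideanSpace ℝ (Fin d)), MeasurableSet A → A ⊆ S →
      (∫ x in A, r x ∂μ) + (∫ x in A, J x) = lam * (μ A).toReal :=
    fun A h1 h2 => hμ A h1 h2
  -- integrability of r with respect to μ on subsets of S
  have hrint : ∀ A : Set (EuclideanSpace ℝ (Fin d)), MeasurableSet A → A ⊆ S → IntegrableOn r A μ := by
    intro A hA hAS
    refine ⟨(hr.mono hAS).aestronglyMeasurable hA, ?_⟩
    exact HasFiniteIntegral.of_bounded (C := Cr)
      (ae_restrict_of_forall_mem hA (fun y hy => hCr y (hAS hy)))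
  -- MAIN STEP: if u vanishes at a point of S, it vanishes on a relative ε₀/2-ball
  have hmain : ∀ x₀ ∈ S, u x₀ = 0 → ∀ x ∈ S ∩ Metric.ball x₀ (ε₀ / 2), u x = 0 := by
    intro x₀ h₀ hu0
    set B := S ∩ Metric.ball x₀ (ε₀ / 2) with hB
    have hBmeas : MeasurableSet B := hSmeas.inter measurableSet_ball
    -- first show μ B = 0
    have hμB : μ B = 0 := by
      by_contra hne
      have hb : 0 < (μ B).toReal := ENNReal.toReal_pos hne (measure_ne_top μ B)
      set m := c₀ * (μ B).toReal with hm
      have hmpos : 0 < m := mul_pos hc₀ hb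
      set η := m / (2 * (|lam| + 1)) with hη
      have habs : (0 : ℝ) ≤ |lam| := abs_nonneg lam
      have hηpos : 0 < η := by positivity
      -- find δ where u < η
      have hcont : ContinuousWithinAt u S x₀ := hu x₀ h₀
      have hev : u ⁻¹' Set.Iio η ∈ 𝓝[S] x₀ := hcont (by rw [hu0]; exact Iio_mem_nhds hηpos)
      obtain ⟨δ₁, hδ₁, hsub⟩ := Metric.mem_nhdsWithin_iff.1 hev
      set δ := min δ₁ (ε₀ / 2) with hδdef
      have hδ : 0 < δ := lt_min hδ₁ (by linarith)
      set A := S ∩ Metric.ball x₀ δ with hA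
      have hAmeas : MeasurableSet A := hSmeas.inter measurableSet_ball
      have hAS : A ⊆ S := Set.inter_subset_left
      have hAB : A ⊆ B :=
        Set.inter_subset_inter_right _ (Metric.ball_subset_ball (min_le_right _ _))
      have hAfin : volume A ≠ ⊤ :=
        ((measure_mono hAS).trans_lt hScomp.measure_lt_top).ne
      have hv : 0 < (volume A).toReal :=
        ENNReal.toReal_pos (hvol x₀ h₀ δ hδ).ne' hAfin
      -- u < η on A
      have hAu : ∀ x ∈ A, u x ≤ η := by
        intro x hx
        exact le_of_lt (hsub ⟨Metric.ball_subset_ball (min_le_left _ _) hx.2, hx.1⟩)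
      -- lower bound on ∫_A J
      have hJA : m * (volume A).toReal ≤ ∫ x in A, J x :=
        setIntegral_ge_of_const_le_real hAmeas hAfin
          (fun x hx => hJlb x₀ h₀ x (hAB hx)) (hJint.mono_set hAS)
      -- ∫_A r dμ ≥ 0
      have hrA : 0 ≤ ∫ x in A, r x ∂μ :=
        setIntegral_nonneg hAmeas (fun x hx => (hrpos x (hAS hx)).le)
      -- μ A small
      have hμA : (μ A).toReal ≤ η * (volume A).toReal := by
        rw [hdens A hAmeas hAS]
        have h1 : ∫ x in A, u x ≤ ∫ x in A, η :=
          setIntegral_mono_on (huint.mono_set hAS)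
            (integrableOn_const hAfin) hAmeas hAu
        have h2 : ∫ x in A, (η : ℝ) = (volume A).toReal * η := by
          rw [setIntegral_const]; simp [smul_eq_mul, measureReal_def]
        rw [h2] at h1; linarith
      have hμAnn : 0 ≤ (μ A).toReal := ENNReal.toReal_nonneg
      have heq := hkey A hAmeas hAS
      have hlamA : lam * (μ A).toReal ≤ |lam| * (η * (volume A).toReal) := by
        calc lam * (μ A).toReal ≤ |lam| * (μ A).toReal :=
              mul_le_mul_of_nonneg_right (le_abs_self lam) hμAnn
          _ ≤ |lam| * (η * (volume A).toReal) := mul_le_mul_of_nonneg_left hμA habs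
      -- combine: m * v ≤ ∫_A J ≤ lam μA ≤ |lam| η v
      have hfinal : m * (volume A).toReal ≤ |lam| * (η * (volume A).toReal) := by
        have : (∫ x in A, J x) ≤ lam * (μ A).toReal := by linarith
        linarith
      have hml : m ≤ |lam| * η := by
        have := le_of_mul_le_mul_right (by linarith [hfinal] :
          m * (volume A).toReal ≤ (|lam| * η) * (volume A).toReal) hv
        exact this
      have hmeq : η * (2 * (|lam| + 1)) = m := by
        rw [hη]; field_simp
      nlinarith
    -- now μ B = 0 gives ∫_B u = 0, hence u = 0 on B
    have hint : (∫ x in B, u x) = 0 := by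
      have := hdens B hBmeas Set.inter_subset_left
      rw [hμB] at this; simpa using this.symm
    exact hzero (Metric.ball x₀ (ε₀ / 2)) Metric.isOpen_ball hint
  -- strict positivity of u on S
  have hupos : ∀ x ∈ S, 0 < u x := by
    by_contra hcon
    push_neg at hcon
    obtain ⟨x₀, hx₀S, hx₀⟩ := hcon
    have hu0 : u x₀ = 0 := le_antisymm hx₀ (hunn x₀ hx₀S)
    -- the zero set of u in the subtype S is clopen and nonempty
    haveI : PreconnectedSpace ↥S := Subtype.preconnectedSpace
      (by rw [hSdef]; exact hΩconn.closure.isPreconnected)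
    set Z : Set ↥S := {x : ↥S | u ↑x = 0} with hZ
    have hZclosed : IsClosed Z := by
      have : Z = (S.restrict u) ⁻¹' {0} := rfl
      rw [this]
      exact IsClosed.preimage hu.restrict isClosed_singleton
    have hZopen : IsOpen Z := by
      rw [Metric.isOpen_iff]
      intro z hz
      refine ⟨ε₀ / 2, by linarith, ?_⟩
      intro w hw
      have hwball : (w : EuclideanSpace ℝ (Fin d)) ∈ S ∩ Metric.ball (z : EuclideanSpace ℝ (Fin d)) (ε₀ / 2) := by
        refine ⟨w.2, ?_⟩
        rw [Metric.mem_ball]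
        rw [Metric.mem_ball, Subtype.dist_eq] at hw
        exact hw
      exact hmain (z : EuclideanSpace ℝ (Fin d)) z.2 hz w hwball
    have hZne : Z.Nonempty := ⟨⟨x₀, hx₀S⟩, hu0⟩
    have hZuniv : Z = Set.univ := IsClopen.eq_univ ⟨hZclosed, hZopen⟩ hZne
    -- hence u = 0 on S, μ S = 0, μ = 0
    have huS : ∀ x ∈ S, u x = 0 := by
      intro x hx
      have : (⟨x, hx⟩ : ↥S) ∈ Z := hZuniv ▸ Set.mem_univ _
      exact this
    have hμSval : μ S = 0 := by
      have h1 : (μ S).toReal = ∫ x in S, u x := hdens S hSmeas le_rfl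
      have h2 : ∫ x in S, u x = 0 := by
        rw [setIntegral_congr_fun hSmeas (g := fun _ => (0 : ℝ)) huS]
        simp
      rw [h2] at h1
      rcases (ENNReal.toReal_eq_zero_iff _).1 h1 with h | h
      · exact h
      · exact absurd h (measure_ne_top μ S)
    have : μ Set.univ = 0 := by
      rw [← measure_add_measure_compl hSmeas, hμSval, hμS, add_zero]
    exact hμne (Measure.measure_univ_eq_zero.1 this)
  refine ⟨hupos, ?_⟩
  -- PART 2: rbar < lam
  obtain ⟨⟨xs, hxsS, hxsr⟩, hub⟩ := hrbar
  set B := S ∩ Metric.ball xs (ε₀ / 2) with hB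
  have hBmeas : MeasurableSet B := hSmeas.inter measurableSet_ball
  have hBS : B ⊆ S := Set.inter_subset_left
  have hμB : 0 < (μ B).toReal := by
    rw [hdens B hBmeas hBS]
    exact hintpos (Metric.ball xs (ε₀ / 2)) Metric.isOpen_ball xs
      ⟨hxsS, Metric.mem_ball_self (by linarith)⟩ (hupos xs hxsS)
  set m := c₀ * (μ B).toReal with hm
  have hmpos : 0 < m := mul_pos hc₀ hμB
  set Cu' := Cu + 1 with hCu'
  have hCu'pos : 0 < Cu' := by
    have h1 := hCu xs hxsS
    have h2 : (0 : ℝ) ≤ ‖u xs‖ := norm_nonneg _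
    rw [hCu']
    linarith
  set η := m / (2 * Cu') with hη
  have hηpos : 0 < η := by positivity
  -- find δ with r > rbar - η on relative δ-ball around xs
  have hcont : ContinuousWithinAt r S xs := hr xs hxsS
  have hev : r ⁻¹' Set.Ioi (rbar - η) ∈ 𝓝[S] xs :=
    hcont (by rw [hxsr]; exact Ioi_mem_nhds (by linarith))
  obtain ⟨δ₁, hδ₁, hsub⟩ := Metric.mem_nhdsWithin_iff.1 hev
  set δ := min δ₁ (ε₀ / 2) with hδdef
  have hδ : 0 < δ := lt_min hδ₁ (by linarith)
  set A := S ∩ Metric.ball xs δ with hA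
  have hAmeas : MeasurableSet A := hSmeas.inter measurableSet_ball
  have hAS : A ⊆ S := Set.inter_subset_left
  have hAB : A ⊆ B :=
    Set.inter_subset_inter_right _ (Metric.ball_subset_ball (min_le_right _ _))
  have hAfin : volume A ≠ ⊤ := ((measure_mono hAS).trans_lt hScomp.measure_lt_top).ne
  have hv : 0 < (volume A).toReal := ENNReal.toReal_pos (hvol xs hxsS δ hδ).ne' hAfin
  -- lower bound for ∫_A r dμ
  have hrlb : (rbar - η) * (μ A).toReal ≤ ∫ x in A, r x ∂μ := by
    refine setIntegral_ge_of_const_le_real hAmeas (measure_ne_top μ A) ?_ (hrint A hAmeas hAS)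
    intro x hx
    exact le_of_lt (hsub ⟨Metric.ball_subset_ball (min_le_left _ _) hx.2, hx.1⟩)
  -- lower bound for ∫_A J
  have hJA : m * (volume A).toReal ≤ ∫ x in A, J x :=
    setIntegral_ge_of_const_le_real hAmeas hAfin
      (fun x hx => hJlb xs hxsS x (hAB hx)) (hJint.mono_set hAS)
  -- upper bound μ A ≤ Cu' * vol A
  have hμA : (μ A).toReal ≤ Cu' * (volume A).toReal := by
    rw [hdens A hAmeas hAS]
    have h1 : ∫ x in A, u x ≤ ∫ x in A, Cu' :=
      setIntegral_mono_on (huint.mono_set hAS)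
        (integrableOn_const hAfin) hAmeas
        (fun x hx => by
          have := hCu x (hAS hx)
          rw [Real.norm_eq_abs] at this
          have := le_abs_self (u x)
          linarith)
    have h2 : ∫ x in A, (Cu' : ℝ) = (volume A).toReal * Cu' := by
      rw [setIntegral_const]; simp [smul_eq_mul, measureReal_def]
    rw [h2] at h1; linarith
  have hμAnn : 0 ≤ (μ A).toReal := ENNReal.toReal_nonneg
  have heq := hkey A hAmeas hAS
  -- combine everything
  have hcomb : (rbar - η) * (μ A).toReal + m * (volume A).toReal ≤ lam * (μ A).toReal := by
    linarith
  have hmeq : η * (2 * Cu') = m := by rw [hη]; field_simp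
  -- conclude
  by_contra hcon
  push_neg at hcon  -- lam ≤ rbar
  have h1 : lam * (μ A).toReal ≤ rbar * (μ A).toReal :=
    mul_le_mul_of_nonneg_right hcon hμAnn
  have h2 : m * (volume A).toReal ≤ η * (μ A).toReal := by nlinarith [hcomb, h1]
  have h3 : η * (μ A).toReal ≤ η * (Cu' * (volume A).toReal) :=
    mul_le_mul_of_nonneg_left hμA hηpos.le
  nlinarith
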